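/- Let q ≥ 2 and P = conv{(0,0,0), (1,0,0), (0,0,1), (p,q,1), (−p−1,−q,−2)} with 1 ≤ p ≤ q, gcd(p,q)=1, and suppose P contains no lattice points other than these five. Then q is odd and the emptiness of the tetrahedron conv{(0,0,0),(1,0,0),(0,0,1),(−p−1,−q,−2)} forces p ∈ {q−2, q−3}, while the emptiness of conv{(0,0,0),(1,0,0),(p,q,1),(−p−1,−q,−2)} forces p ∈ {2,3}; consequently q = 5 and p ∈ {2,3}. -/

import Mathlib

/-- The inclusion of lattice points of ℤ³ into ℝ³. -/
def toR (p : Fin 3 → ℤ) : Fin 3 → ℝ := fun i => (p i : ℝ)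

private lemma comb_mem {s : Set (Fin 3 → ℝ)} {v0 v1 v2 v3 v4 : Fin 3 → ℝ}
    (h0 : v0 ∈ s) (h1 : v1 ∈ s) (h2 : v2 ∈ s) (h3 : v3 ∈ s) (h4 : v4 ∈ s)
    {a b c d e : ℝ} (ha : 0 ≤ a) (hb : 0 ≤ b) (hc : 0 ≤ c) (hd : 0 ≤ d)
    (he : 0 ≤ e) (hsum : a + b + c + d + e = 1) :
    a • v0 + b • v1 + c • v2 + d • v3 + e • v4 ∈ convexHull ℝ s := by
  have key := (convex_convexHull ℝ s).sum_mem (t := (Finset.univ : Finset (Fin 5)))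
    (w := ![a, b, c, d, e]) (z := ![v0, v1, v2, v3, v4])
    (fun i _ => by fin_cases i <;> [exact ha; exact hb; exact hc; exact hd; exact he])
    (by simp [Fin.sum_univ_five]; linarith)
    (fun i _ => by fin_cases i <;> [exact subset_convexHull ℝ s h0; exact subset_convexHull ℝ s h1; exact subset_convexHull ℝ s h2; exact subset_convexHull ℝ s h3; exact subset_convexHull ℝ s h4])
  simpa [Fin.sum_univ_five] using key

private lemma mem_hull (p q : ℤ) (a b c d e : ℝ) (ha : 0 ≤ a) (hb : 0 ≤ b)
    (hc : 0 ≤ c) (hd : 0 ≤ d) (he : 0 ≤ e) (hsum : a + b + c + d + e = 1)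
    (x y w : ℤ)
    (h0 : (x : ℝ) = b + d * p + e * (-p - 1))
    (h1 : (y : ℝ) = d * q + e * (-q))
    (h2 : (w : ℝ) = c + d + e * (-2)) :
    toR ![x, y, w] ∈ convexHull ℝ (toR ''
      ({![0,0,0], ![1,0,0], ![0,0,1], ![p,q,1], ![-p-1,-q,-2]} : Set (Fin 3 → ℤ))) := by
  have heq : toR ![x, y, w] =
      a • toR ![0,0,0] + b • toR ![1,0,0] + c • toR ![0,0,1] +
      d • toR ![p,q,1] + e • toR ![-p-1,-q,-2] := by
    funext i
    fin_cases i
    · simp [toR]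
      push_cast
      linear_combination h0
    · simp [toR]
      push_cast
      linear_combination h1
    · simp [toR]
      push_cast
      linear_combination h2
  rw [heq]
  exact comb_mem
    (Set.mem_image_of_mem _ (by simp)) (Set.mem_image_of_mem _ (by simp))
    (Set.mem_image_of_mem _ (by simp)) (Set.mem_image_of_mem _ (by simp))
    (Set.mem_image_of_mem _ (by simp)) ha hb hc hd he hsum

/-- Classification of symmetric signature-(4,1) size-5 polytopes with q > 1:
if P = conv{(0,0,0),(1,0,0),(0,0,1),(p,q,1),(−p−1,−q,−2)} (1 ≤ p ≤ q,
gcd(p,q)=1, q ≥ 2) contains no lattice points other than these five, then q is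
odd, p ∈ {q−2, q−3}, p ∈ {2, 3}, and consequently q = 5 and p ∈ {2,3}. -/
theorem symmetric_41_classification (p q : ℤ) (hq : 2 ≤ q) (hp1 : 1 ≤ p)
    (hp2 : p ≤ q) (hgcd : Int.gcd p q = 1)
    (hempty : ∀ z : Fin 3 → ℤ,
      toR z ∈ convexHull ℝ (toR ''
        ({![0,0,0], ![1,0,0], ![0,0,1], ![p,q,1], ![-p-1,-q,-2]} : Set (Fin 3 → ℤ))) →
      z ∈ ({![0,0,0], ![1,0,0], ![0,0,1], ![p,q,1], ![-p-1,-q,-2]} : Set (Fin 3 → ℤ))) :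
    Odd q ∧ (p = q - 2 ∨ p = q - 3) ∧ (p = 2 ∨ p = 3) ∧ q = 5 := by
  have hqR : (0:ℝ) < (q:ℝ) := by exact_mod_cast lt_of_lt_of_le two_pos hq
  have hqR' : (q:ℝ) ≠ 0 := ne_of_gt hqR
  have hpR : (1:ℝ) ≤ (p:ℝ) := by exact_mod_cast hp1
  have hpqR : (p:ℝ) ≤ (q:ℝ) := by exact_mod_cast hp2
  -- q is odd
  have H1 : Odd q := by
    by_contra h
    rw [Int.not_odd_iff_even] at h
    obtain ⟨m, hm⟩ := h
    rcases Int.even_or_odd p with hpe | hpo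
    · obtain ⟨k, hk⟩ := hpe
      have h2 : (2:ℤ) ∣ (Int.gcd p q : ℤ) :=
        Int.dvd_coe_gcd ⟨k, by omega⟩ ⟨m, by omega⟩
      rw [hgcd] at h2
      norm_num at h2
    · obtain ⟨k, hk⟩ := hpo
      have hmem := hempty ![-(k+1), -m, -1] (mem_hull p q (1/2) 0 0 0 (1/2)
        (by norm_num) le_rfl le_rfl le_rfl (by norm_num) (by norm_num)
        (-(k+1)) (-m) (-1)
        (by push_cast [hk]; ring) (by push_cast [hm]; ring) (by norm_num))
      simp only [Set.mem_insert_iff, Set.mem_singleton_iff] at hmem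
      rcases hmem with h | h | h | h | h <;> simpa using congrFun h 2
  obtain ⟨t, ht⟩ := H1
  have hq3 : 3 ≤ q := by omega
  have hq3R : (3:ℝ) ≤ (q:ℝ) := by exact_mod_cast hq3
  -- p ∈ {2, 3}
  have H3 : p = 2 ∨ p = 3 := by
    by_contra h
    push_neg at h
    have hcase : p = 1 ∨ 4 ≤ p := by omega
    rcases hcase with h1 | h4
    · -- witness (0, 1, 0)
      have hmem := hempty ![0, 1, 0] (mem_hull p q ((q-3)/q) 0 0 (2/q) (1/q)
        (div_nonneg (by linarith) hqR.le) le_rfl le_rfl (by positivity) (by positivity)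
        (by field_simp; try ring) 0 1 0
        (by push_cast [h1]; field_simp; try ring)
        (by push_cast; field_simp; try ring)
        (by push_cast; field_simp; try ring))
      simp only [Set.mem_insert_iff, Set.mem_singleton_iff] at hmem
      rcases hmem with hh | hh | hh | hh | hh <;>
        · have e0 := congrFun hh 0
          have e1 := congrFun hh 1
          have e2 := congrFun hh 2
          simp at e0 e1 e2 <;> omega
    · -- witness (1, 1, 0)
      have hp4R : (4:ℝ) ≤ (p:ℝ) := by exact_mod_cast h4
      have hmem := hempty ![1, 1, 0] (mem_hull p q ((p-4)/q) ((q-p+1)/q) 0 (2/q) (1/q)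
        (div_nonneg (by linarith) hqR.le) (div_nonneg (by linarith) (le_of_lt hqR)) le_rfl
        (by positivity) (by positivity)
        (by field_simp; try ring) 1 1 0
        (by push_cast; field_simp; try ring)
        (by push_cast; field_simp; try ring)
        (by push_cast; field_simp; try ring))
      simp only [Set.mem_insert_iff, Set.mem_singleton_iff] at hmem
      rcases hmem with hh | hh | hh | hh | hh <;>
        · have e0 := congrFun hh 0
          have e1 := congrFun hh 1
          have e2 := congrFun hh 2
          simp at e0 e1 e2 <;> omega
  -- p ∈ {q-2, q-3}
  have H2 : p = q - 2 ∨ p = q - 3 := by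
    by_contra h
    push_neg at h
    have hcase : p ≤ q - 4 ∨ p = q - 1 ∨ p = q := by omega
    rcases hcase with h4 | h1 | h0
    · -- witness (0, -1, 0)
      have hp4R : (p:ℝ) ≤ (q:ℝ) - 4 := by
        have : (p:ℝ) ≤ ((q - 4 : ℤ) : ℝ) := by exact_mod_cast h4
        push_cast at this; linarith
      have hmem := hempty ![0, -1, 0] (mem_hull p q ((q-p-4)/q) ((p+1)/q) (2/q) 0 (1/q)
        (div_nonneg (by linarith) (le_of_lt hqR))
        (div_nonneg (by linarith) (le_of_lt hqR)) (by positivity) le_rfl (by positivity)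
        (by field_simp; try ring) 0 (-1) 0
        (by push_cast; field_simp; try ring)
        (by push_cast; field_simp; try ring)
        (by push_cast; field_simp; try ring))
      simp only [Set.mem_insert_iff, Set.mem_singleton_iff] at hmem
      rcases hmem with hh | hh | hh | hh | hh <;>
        · have e0 := congrFun hh 0
          have e1 := congrFun hh 1
          have e2 := congrFun hh 2
          simp at e0 e1 e2 <;> omega
    · -- witness (-1, -1, 0)
      have hpq1R : (p:ℝ) = (q:ℝ) - 1 := by
        have : (p:ℝ) = ((q - 1 : ℤ) : ℝ) := by exact_mod_cast h1
        push_cast at this; linarith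
      have hmem := hempty ![-1, -1, 0] (mem_hull p q ((q-3)/q) 0 (2/q) 0 (1/q)
        (div_nonneg (by linarith) hqR.le) le_rfl (by positivity) le_rfl (by positivity)
        (by field_simp; try ring) (-1) (-1) 0
        (by push_cast; rw [hpq1R]; field_simp; try ring)
        (by push_cast; field_simp; try ring)
        (by push_cast; field_simp; try ring))
      simp only [Set.mem_insert_iff, Set.mem_singleton_iff] at hmem
      rcases hmem with hh | hh | hh | hh | hh <;>
        · have e0 := congrFun hh 0
          have e1 := congrFun hh 1
          have e2 := congrFun hh 2
          simp at e0 e1 e2 <;> omega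
    · -- p = q contradicts gcd = 1
      rw [h0, Int.gcd_self] at hgcd
      omega
  refine ⟨⟨t, ht⟩, H2, H3, by omega⟩
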